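/- Let L be a cyclic Latin square of order n and let σ_C, σ_E ∈ S_n be such that the array L' obtained from L by permuting columns by σ_C and symbols by σ_E is also a cyclic Latin square. Then, setting x = σ_E(1) − σ_E(0) (mod n), we have x = σ_C(1) − σ_C(0) (mod n), gcd(x,n) = 1, and σ_C(j) ≡ σ_C(0) + jx (mod n) and σ_E(j) ≡ σ_E(0) + jx (mod n) for all 0 ≤ j < n. -/

import Mathlib

/-- An `n × n` array on `ZMod n` is a Latin square if every row and column is a bijection. -/
def IsLatinSq (n : ℕ) (L : ZMod n → ZMod n → ZMod n) : Prop :=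
  (∀ r, Function.Bijective fun c => L r c) ∧ (∀ c, Function.Bijective fun r => L r c)

/-- A Latin square is cyclic if `(r,c,e) ∈ L` implies `(r,c+1,e+1) ∈ L`. -/
def IsCyclicSq (n : ℕ) (L : ZMod n → ZMod n → ZMod n) : Prop :=
  ∀ r c, L r (c + 1) = L r c + 1

lemma aux_step {n : ℕ} (h : ZMod n → ZMod n) (k : ZMod n)
    (H : ∀ c, h (c + 1) = h c + k) : ∀ c, h c = h 0 + c * k := by
  have Hint : ∀ m : ℤ, h (m : ZMod n) = h 0 + (m : ZMod n) * k := by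
    intro m
    induction m using Int.induction_on with
    | zero => simp
    | succ i ih =>
        have h1 := H (i : ZMod n)
        push_cast at ih ⊢
        linear_combination h1 + ih
    | pred i ih =>
        have h1 := H (-(i : ZMod n) - 1)
        rw [show -(i : ZMod n) - 1 + 1 = -(i : ZMod n) from by ring] at h1
        push_cast at ih ⊢
        linear_combination ih - h1
  intro c
  have := Hint (ZMod.cast c : ℤ)
  rwa [ZMod.intCast_zmod_cast] at this

/-- Lemma 4: if permuting the columns of a cyclic Latin square by `σC` and the symbols by `σE`
again gives a cyclic Latin square, then with `x = σE(1) - σE(0)` we have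
`x = σC(1) - σC(0)`, `x` is a unit mod `n`, and `σC(j) = σC(0) + jx`, `σE(j) = σE(0) + jx`. -/
theorem colSymbolPerm_of_cyclic (n : ℕ) (L : ZMod n → ZMod n → ZMod n)
    (hLatin : IsLatinSq n L) (hCyc : IsCyclicSq n L)
    (σC σE : Equiv.Perm (ZMod n))
    (hLatin' : IsLatinSq n fun r c => σE (L r (σC.symm c)))
    (hCyc' : IsCyclicSq n fun r c => σE (L r (σC.symm c))) :
    σE 1 - σE 0 = σC 1 - σC 0 ∧
    IsUnit (σE 1 - σE 0) ∧
    (∀ j : ZMod n, σC j = σC 0 + j * (σE 1 - σE 0)) ∧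
    (∀ j : ZMod n, σE j = σE 0 + j * (σE 1 - σE 0)) := by
  set g := σC.symm with hg
  have hL : ∀ r c, L r c = L r 0 + c := by
    intro r c
    have := aux_step (L r) 1 (fun c => hCyc r c) c
    simpa using this
  have hsurj : Function.Surjective (fun r => L r 0) := (hLatin.2 0).2
  set d : ZMod n := g 1 - g 0 with hd
  -- key identity
  have key : ∀ (a c : ZMod n), σE (a + (g (c + 1) - g c)) = σE a + 1 := by
    intro a c
    obtain ⟨r, hr⟩ := hsurj (a - g c)
    have h1 := hCyc' r c
    simp only [hL r (g (c + 1)), hL r (g c), hr] at h1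
    rw [show a - g c + g (c + 1) = a + (g (c + 1) - g c) from by ring,
        show a - g c + g c = a from by ring] at h1
    exact h1
  have HE : ∀ t : ZMod n, σE (t + d) = σE t + 1 := by
    intro t
    have := key t 0
    rwa [zero_add, ← hd] at this
  -- g has constant difference d
  have hstep : ∀ c, g (c + 1) = g c + d := by
    intro c
    have h1 := key 0 c
    have h2 := HE 0
    have := σE.injective (h1.trans h2.symm)
    have h3 : g (c + 1) - g c = d := by linear_combination this
    linear_combination h3
  have hgc : ∀ c, g c = g 0 + c * d := aux_step g d hstep
  -- d is a unit: find e with e * d = 1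
  obtain ⟨c₁, hc₁⟩ := g.surjective (g 0 + 1)
  have hed : c₁ * d = 1 := by
    have := hgc c₁
    rw [hc₁] at this
    linear_combination - this
  set e : ZMod n := c₁ with he
  -- σE formula
  have hEk : ∀ j : ZMod n, σE (j * d) = σE 0 + j := by
    intro j
    have := aux_step (fun j => σE (j * d)) 1
      (fun c => by rw [add_mul, one_mul, HE]) j
    simpa using this
  have hEt : ∀ t : ZMod n, σE t = σE 0 + t * e := by
    intro t
    have h1 := hEk (t * e)
    rw [show t * e * d = t * (e * d) from by ring, hed, mul_one] at h1
    linear_combination h1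
  have hx : σE 1 - σE 0 = e := by rw [hEt 1]; ring
  -- σC formula
  have hCj : ∀ j : ZMod n, σC j = (j - g 0) * e := by
    intro j
    have h1 : g ((j - g 0) * e) = j := by
      rw [hgc, show (j - g 0) * e * d = (j - g 0) * (e * d) from by ring, hed]; ring
    have := congrArg σC h1
    rw [hg, Equiv.apply_symm_apply] at this
    exact this.symm
  refine ⟨?_, ?_, ?_, ?_⟩
  · rw [hx, hCj 1, hCj 0]; ring
  · rw [hx]; exact IsUnit.of_mul_eq_one (a := e) d hed
  · intro j; rw [hx, hCj j, hCj 0]; ring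
  · intro j; rw [hx]; linear_combination hEt j
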